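/- Let R be a commutative noetherian ring with unity, let a be an ideal of R, and let M be an R-module. If the R-module M/aM is finitely generated, then the a-adic completion M̂^a of M is a finitely generated module over the a-adic completion R̂^a of R. -/

import Mathlib

open AdicCompletion

/-- If `N` is a submodule with `N ⊔ I • ⊤ = ⊤`, then the completion of the inclusion is
surjective. -/
theorem adicCompletion_map_subtype_surjective_of_sup_smul_top
    {R : Type*} [CommRing R] (I : Ideal R) {M : Type*} [AddCommGroup M] [Module R M]
    (N : Submodule R M) (hN : N ⊔ (I • ⊤ : Submodule R M) = ⊤) :
    Function.Surjective (AdicCompletion.map I N.subtype) := by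
  intro y
  apply AdicCompletion.induction_on I M y (fun x ↦ ?_)
  have key : ∀ (n : ℕ) (c : N), ∃ d : N, d ∈ (I ^ n • ⊤ : Submodule R N) ∧
      ((x (n+1) : M) - c ∈ (I ^ n • ⊤ : Submodule R M) →
        (x (n+1) : M) - (↑c + ↑d) ∈ (I ^ (n+1) • ⊤ : Submodule R M)) := by
    intro n c
    by_cases hc : (x (n+1) : M) - c ∈ (I ^ n • ⊤ : Submodule R M)
    · have hdecomp : (I ^ n • ⊤ : Submodule R M) = I ^ n • N ⊔ I ^ (n+1) • ⊤ := by
        conv_lhs => rw [← hN, Submodule.smul_sup, ← Submodule.smul_assoc, smul_eq_mul,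
          ← pow_succ]
      rw [hdecomp] at hc
      obtain ⟨z, hz, e, he, hze⟩ := Submodule.mem_sup.mp hc
      have : z ∈ Submodule.map N.subtype (I ^ n • ⊤ : Submodule R N) := by
        rwa [Submodule.map_smul'', Submodule.map_top, Submodule.range_subtype]
      obtain ⟨d, hd, hdz⟩ := this
      refine ⟨d, hd, fun _ ↦ ?_⟩
      have hdz' : (d : M) = z := hdz
      have he' : e = (x (n+1) : M) - ↑c - z := by rw [← hze]; abel
      have : (x (n+1) : M) - (↑c + ↑d) = e := by rw [hdz', he']; abel
      rw [this]; exact he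
    · exact ⟨0, Submodule.zero_mem _, fun h ↦ absurd h hc⟩
  choose d hd1 hd2 using key
  let b : ℕ → N := fun n ↦ Nat.rec 0 (fun n c ↦ c + d n c) n
  have hb : ∀ n, b (n + 1) = b n + d n (b n) := fun n ↦ rfl
  have happrox : ∀ n, (x n : M) - N.subtype (b n) ∈ (I ^ n • ⊤ : Submodule R M) := by
    intro n
    induction n with
    | zero => simp [b]
    | succ n ih =>
      rw [hb]
      apply hd2 n (b n)
      have hx : (x (n+1) : M) - x n ∈ (I ^ n • ⊤ : Submodule R M) := by
        have h2 := x.property (Nat.le_succ n)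
        rw [SModEq.sub_mem] at h2
        simpa [neg_sub] using Submodule.neg_mem _ h2
      have h3 := Submodule.add_mem _ hx ih
      convert h3 using 1
      abel
  have hcauchy : ∀ n, (b n : N) ≡ b (n + 1) [SMOD (I ^ n • ⊤ : Submodule R N)] := by
    intro n
    rw [SModEq.sub_mem, hb]
    simpa using Submodule.neg_mem _ (hd1 n (b n))
  refine ⟨AdicCompletion.mk I N (AdicCauchySequence.mk I N (fun n ↦ b n) hcauchy), ?_⟩
  rw [AdicCompletion.map_mk]
  refine AdicCompletion.ext fun n ↦ ?_
  simp only [AdicCompletion.mk_apply_coe, Submodule.mkQ_apply]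
  exact (Submodule.Quotient.eq _).mpr
    (by simpa [neg_sub] using Submodule.neg_mem _ (happrox n))

/-- If `M/aM` is a finitely generated `R`-module, then the `a`-adic completion of `M`
is a finitely generated module over the `a`-adic completion of `R`. -/
theorem adicCompletion_finite_of_quotient_finite
    {R : Type*} [CommRing R] [IsNoetherianRing R] (a : Ideal R)
    (M : Type*) [AddCommGroup M] [Module R M]
    (h : Module.Finite R (M ⧸ (a • ⊤ : Submodule R M))) :
    Module.Finite (AdicCompletion a R) (AdicCompletion a M) := by
  obtain ⟨s, hs⟩ := h.fg_top
  choose g hg using fun y : M ⧸ (a • ⊤ : Submodule R M) ↦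
    Submodule.Quotient.mk_surjective _ y
  let N : Submodule R M := Submodule.span R (g '' ↑s)
  have hmap : Submodule.map (Submodule.mkQ (a • ⊤ : Submodule R M)) N = ⊤ := by
    rw [Submodule.map_span, ← Set.image_comp]
    have : (Submodule.mkQ (a • ⊤ : Submodule R M)) ∘ g = id := funext fun y ↦ hg y
    rw [this, Set.image_id]
    exact hs
  have hsup : N ⊔ (a • ⊤ : Submodule R M) = ⊤ := by
    have := (Submodule.map_mkQ_eq_top (a • ⊤ : Submodule R M) N).mp hmap
    rwa [sup_comm] at this
  have hNfin : Module.Finite R N :=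
    Module.Finite.span_of_finite R ((s.finite_toSet).image g)
  have hsurj : Function.Surjective (AdicCompletion.map a N.subtype) :=
    adicCompletion_map_subtype_surjective_of_sup_smul_top a N hsup
  have : Module.Finite (AdicCompletion a R) (AdicCompletion a N) :=
    Module.Finite.of_surjective (ofTensorProduct a N)
      (ofTensorProduct_surjective_of_finite a N)
  exact Module.Finite.of_surjective (AdicCompletion.map a N.subtype) hsurj
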